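/- Fix b ∈ ℝ with b ≠ -1/2, b ≠ -1. Define w : ℕ × ℤ → ℝ for m ≥ 1 by w_{n,m} = 1/(2^n (−1−2b)^m) − Σ_{κ=0}^{m−1} Σ_{ρ=max{n,κ}}^{n+m} C(m, ρ−n)·C(ρ, κ)·(−1)^{n+m−κ} b^{ρ−κ} / (b + 1/2)^{m−κ}, and w_{n,0} = 2^{−n}, w_{0,m} = 1. Then w satisfies w_{n,m} − w_{n+1,m} + b·w_{n,m+1} + w_{n+1,m+1} = 0 for all n ≥ 0 and m ≥ 0, and satisfies the boundary conditions w_{0,m} = 1 and w_{n,0} = 2^{−n}. -/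

import Mathlib

/-- Explicit solution of the initial-boundary value problem for
`w − w₁₀ + b w₀₁ + w₁₁ = 0` with data `w_{n,0} = 2^{−n}`, `w_{0,m} = 1`. -/
noncomputable def wSol (b : ℝ) (n m : ℕ) : ℝ :=
  if m = 0 then (2 : ℝ)^(-(n : ℤ))
  else 1 / ((2 : ℝ)^n * (-1 - 2 * b)^m)
    - ∑ κ ∈ Finset.range m, ∑ ρ ∈ Finset.Icc (max n κ) (n + m),
        (Nat.choose m (ρ - n) : ℝ) * (Nat.choose ρ κ : ℝ) * (-1 : ℝ)^(n + m - κ)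
          * b^(ρ - κ) / (b + 1/2)^(m - κ)

namespace WSolAux

/-- The inner auxiliary sum. -/
noncomputable def fF (b : ℝ) (n m κ : ℕ) : ℝ :=
  ∑ j ∈ Finset.range (m+1),
    (Nat.choose m j : ℝ) * (Nat.choose (n+j) κ : ℝ) * b^(n+j-κ)

/-- The outer auxiliary sum. -/
noncomputable def fS (b : ℝ) (n m : ℕ) : ℝ :=
  ∑ κ ∈ Finset.range m, (-1:ℝ)^(n+m-κ) / (b+1/2)^(m-κ) * fF b n m κ

lemma pascal_sum (G : ℕ → ℝ) (m : ℕ) :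
    ∑ j ∈ Finset.range (m+2), ((m+1).choose j : ℝ) * G j
    = ∑ j ∈ Finset.range (m+1), (m.choose j : ℝ) * G j
      + ∑ j ∈ Finset.range (m+1), (m.choose j : ℝ) * G (j+1) := by
  rw [Finset.sum_range_succ' (fun j => (((m+1).choose j : ℕ) : ℝ) * G j) (m+1)]
  rw [Finset.sum_range_succ' (fun j => ((m.choose j : ℕ) : ℝ) * G j) m]
  have h1 : ∀ j ∈ Finset.range (m+1),
      (((m+1).choose (j+1) : ℕ) : ℝ) * G (j+1)
      = ((m.choose j : ℕ) : ℝ) * G (j+1) + ((m.choose (j+1) : ℕ) : ℝ) * G (j+1) := by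
    intro j _
    rw [Nat.choose_succ_succ]
    push_cast
    ring
  rw [Finset.sum_congr rfl h1, Finset.sum_add_distrib]
  have h2 : ∑ j ∈ Finset.range (m+1), ((m.choose (j+1) : ℕ) : ℝ) * G (j+1)
      = ∑ j ∈ Finset.range m, ((m.choose (j+1) : ℕ) : ℝ) * G (j+1) := by
    rw [Finset.sum_range_succ]
    simp [Nat.choose_succ_self]
  rw [h2]
  simp only [Nat.choose_zero_right, Nat.cast_one, one_mul]
  ring

lemma fF_shift_n0 (b : ℝ) (n m : ℕ) : fF b (n+1) m 0 = b * fF b n m 0 := by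
  unfold fF
  rw [Finset.mul_sum]
  refine Finset.sum_congr rfl fun j _ => ?_
  have h1 : n + 1 + j - 0 = (n + j) + 1 := by omega
  have h2 : n + j - 0 = n + j := by omega
  rw [h1, h2, pow_succ]
  simp [Nat.choose_zero_right]
  ring

lemma fF_shift_n (b : ℝ) (n m κ : ℕ) :
    fF b (n+1) m (κ+1) = b * fF b n m (κ+1) + fF b n m κ := by
  unfold fF
  rw [Finset.mul_sum, ← Finset.sum_add_distrib]
  refine Finset.sum_congr rfl fun j _ => ?_
  have hch : ((n+1+j).choose (κ+1) : ℝ)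
      = ((n+j).choose κ : ℝ) + ((n+j).choose (κ+1) : ℝ) := by
    have h : n + 1 + j = (n + j) + 1 := by omega
    rw [h, Nat.choose_succ_succ]
    push_cast; ring
  have he : n + 1 + j - (κ + 1) = n + j - κ := by omega
  rw [he, hch]
  rcases le_or_gt (κ+1) (n+j) with h | h
  · have h' : n + j - κ = (n + j - (κ+1)) + 1 := by omega
    rw [h', pow_succ]
    ring
  · have h0 : ((n+j).choose (κ+1) : ℝ) = 0 := by
      rw [Nat.choose_eq_zero_of_lt h]; norm_num
    rw [h0]
    ring

lemma fF_shift_m (b : ℝ) (n m κ : ℕ) :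
    fF b n (m+1) κ = fF b n m κ + fF b (n+1) m κ := by
  have key := pascal_sum (fun ρ => ((n+ρ).choose κ : ℝ) * b^(n+ρ-κ)) m
  unfold fF
  have e1 : ∑ j ∈ Finset.range (m+2),
      ((m+1).choose j : ℝ) * ((n+j).choose κ : ℝ) * b^(n+j-κ)
      = ∑ j ∈ Finset.range (m+2),
      ((m+1).choose j : ℝ) * (((n+j).choose κ : ℝ) * b^(n+j-κ)) := by
    refine Finset.sum_congr rfl fun j _ => by ring
  have e2 : ∑ j ∈ Finset.range (m+1),
      (m.choose j : ℝ) * ((n+j).choose κ : ℝ) * b^(n+j-κ)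
      = ∑ j ∈ Finset.range (m+1),
      (m.choose j : ℝ) * (((n+j).choose κ : ℝ) * b^(n+j-κ)) := by
    refine Finset.sum_congr rfl fun j _ => by ring
  have e3 : ∑ j ∈ Finset.range (m+1),
      (m.choose j : ℝ) * ((n+1+j).choose κ : ℝ) * b^(n+1+j-κ)
      = ∑ j ∈ Finset.range (m+1),
      (m.choose j : ℝ) * (((n+(j+1)).choose κ : ℝ) * b^(n+(j+1)-κ)) := by
    refine Finset.sum_congr rfl fun j _ => ?_
    have h : n + 1 + j = n + (j+1) := by omega
    rw [h]; ring
  rw [e1, e2, e3]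
  exact key

lemma fF_zero (b : ℝ) (m κ : ℕ) (hκ : κ ≤ m) :
    fF b 0 m κ = (m.choose κ : ℝ) * (1+b)^(m-κ) := by
  unfold fF
  have hz : ∀ j ∈ Finset.range (m+1), j ∉ Finset.Ico κ (m+1) →
      (m.choose j : ℝ) * ((0+j).choose κ : ℝ) * b^(0+j-κ) = 0 := by
    intro j hj hj2
    simp only [Finset.mem_range] at hj
    simp only [Finset.mem_Ico] at hj2
    have h : j < κ := by omega
    rw [zero_add, Nat.choose_eq_zero_of_lt h]
    norm_num
  have hsub : Finset.Ico κ (m+1) ⊆ Finset.range (m+1) := by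
    intro x hx
    simp only [Finset.mem_Ico] at hx
    simp only [Finset.mem_range]
    omega
  rw [← Finset.sum_subset hsub hz, Finset.sum_Ico_eq_sum_range]
  have hrw : ∀ i ∈ Finset.range (m+1-κ),
      (m.choose (κ+i) : ℝ) * ((0+(κ+i)).choose κ : ℝ) * b^(0+(κ+i)-κ)
      = (m.choose κ : ℝ) * (b^i * 1^(m-κ-i) * ((m-κ).choose i : ℝ)) := by
    intro i hi
    simp only [Finset.mem_range] at hi
    have h1 : m.choose (κ+i) * (κ+i).choose κ = m.choose κ * (m-κ).choose i := by
      have h := Nat.choose_mul (n := m) (k := κ+i) (s := κ) (by omega)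
      simpa using h
    have h2 : 0+(κ+i)-κ = i := by omega
    have h3 : (0:ℕ)+(κ+i) = κ+i := by omega
    rw [h2, h3]
    have h4 : (m.choose (κ+i) : ℝ) * ((κ+i).choose κ : ℝ)
        = (m.choose κ : ℝ) * ((m-κ).choose i : ℝ) := by
      exact_mod_cast congrArg (Nat.cast : ℕ → ℝ) h1
    calc (m.choose (κ+i) : ℝ) * ((κ+i).choose κ : ℝ) * b^i
        = (m.choose κ : ℝ) * ((m-κ).choose i : ℝ) * b^i := by rw [h4]
      _ = (m.choose κ : ℝ) * (b^i * 1^(m-κ-i) * ((m-κ).choose i : ℝ)) := by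
          rw [one_pow]; ring
  rw [Finset.sum_congr rfl hrw, ← Finset.mul_sum]
  have h5 : m + 1 - κ = (m - κ) + 1 := by omega
  rw [h5, ← add_pow b 1 (m-κ)]
  ring_nf

lemma wSol_eq (b : ℝ) (n m : ℕ) :
    wSol b n m = 1 / ((2:ℝ)^n * (-1 - 2*b)^m) - fS b n m := by
  cases m with
  | zero =>
    simp [wSol, fS, zpow_neg, zpow_natCast]
  | succ k =>
    rw [wSol]
    simp only [Nat.succ_ne_zero, if_false]
    congr 1
    unfold fS
    refine Finset.sum_congr rfl fun κ hκ => ?_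
    simp only [Finset.mem_range] at hκ
    have hsub : Finset.Icc (max n κ) (n + (k+1)) ⊆ Finset.Icc n (n + (k+1)) := by
      intro x hx
      simp only [Finset.mem_Icc] at hx ⊢
      omega
    have hz : ∀ ρ ∈ Finset.Icc n (n + (k+1)), ρ ∉ Finset.Icc (max n κ) (n + (k+1)) →
        ((k+1).choose (ρ - n) : ℝ) * (ρ.choose κ : ℝ) * (-1:ℝ)^(n + (k+1) - κ)
          * b^(ρ - κ) / (b + 1/2)^((k+1) - κ) = 0 := by
      intro ρ h1 h2
      simp only [Finset.mem_Icc] at h1 h2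
      have h : ρ < κ := by omega
      rw [Nat.choose_eq_zero_of_lt h]
      norm_num
    rw [Finset.sum_subset hsub hz]
    have hIco : Finset.Icc n (n + (k+1)) = Finset.Ico n (n + (k+1) + 1) := by
      rw [Finset.Ico_add_one_right_eq_Icc]
    rw [hIco, Finset.sum_Ico_eq_sum_range]
    have hlen : n + (k+1) + 1 - n = (k+1) + 1 := by omega
    rw [hlen]
    unfold fF
    rw [Finset.mul_sum]
    refine Finset.sum_congr rfl fun j hj => ?_
    have h1 : n + j - n = j := by omega
    rw [h1]
    field_simp

lemma key (b : ℝ) (n m : ℕ) :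
    fS b n m - fS b (n+1) m + b * fS b n (m+1) + fS b (n+1) (m+1) = 0 := by
  have step1 : b * fS b n (m+1) + fS b (n+1) (m+1)
      = ∑ κ ∈ Finset.range (m+1), (-1:ℝ)^(n+(m+1)-κ) / (b+1/2)^((m+1)-κ)
          * (b * fF b n (m+1) κ - fF b (n+1) (m+1) κ) := by
    unfold fS
    rw [Finset.mul_sum, ← Finset.sum_add_distrib]
    refine Finset.sum_congr rfl fun κ hκ => ?_
    simp only [Finset.mem_range] at hκ
    have hsign : (-1:ℝ)^(n+1+(m+1)-κ) = -(-1:ℝ)^(n+(m+1)-κ) := by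
      have h : n+1+(m+1)-κ = (n+(m+1)-κ) + 1 := by omega
      rw [h, pow_succ]
      ring
    rw [hsign]
    ring
  have step2 : ∑ κ ∈ Finset.range (m+1), (-1:ℝ)^(n+(m+1)-κ) / (b+1/2)^((m+1)-κ)
          * (b * fF b n (m+1) κ - fF b (n+1) (m+1) κ)
      = - ∑ κ ∈ Finset.range m, (-1:ℝ)^(n+m-κ) / (b+1/2)^(m-κ)
          * (fF b n m κ + fF b (n+1) m κ) := by
    rw [Finset.sum_range_succ'
      (fun κ => (-1:ℝ)^(n+(m+1)-κ) / (b+1/2)^((m+1)-κ)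
          * (b * fF b n (m+1) κ - fF b (n+1) (m+1) κ)) m]
    have hz : b * fF b n (m+1) 0 - fF b (n+1) (m+1) 0 = 0 := by
      rw [fF_shift_n0]; ring
    rw [hz, mul_zero, add_zero]
    rw [← Finset.sum_neg_distrib]
    refine Finset.sum_congr rfl fun κ hκ => ?_
    simp only [Finset.mem_range] at hκ
    have hdiff : b * fF b n (m+1) (κ+1) - fF b (n+1) (m+1) (κ+1) = - fF b n (m+1) κ := by
      rw [fF_shift_n]; ring
    have he1 : n + (m+1) - (κ+1) = n + m - κ := by omega
    have he2 : (m+1) - (κ+1) = m - κ := by omega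
    rw [hdiff, he1, he2, fF_shift_m]
    ring
  have step3 : fS b n m - fS b (n+1) m
      = ∑ κ ∈ Finset.range m, (-1:ℝ)^(n+m-κ) / (b+1/2)^(m-κ)
          * (fF b n m κ + fF b (n+1) m κ) := by
    unfold fS
    rw [← Finset.sum_sub_distrib]
    refine Finset.sum_congr rfl fun κ hκ => ?_
    simp only [Finset.mem_range] at hκ
    have hsign : (-1:ℝ)^(n+1+m-κ) = -(-1:ℝ)^(n+m-κ) := by
      have h : n+1+m-κ = (n+m-κ) + 1 := by omega
      rw [h, pow_succ]
      ring
    rw [hsign]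
    ring
  linarith [step1, step2, step3]

end WSolAux

theorem stmt11 (b : ℝ) (hb2 : b ≠ -1/2) (hb1 : b ≠ -1) :
    (∀ n m : ℕ, wSol b n m - wSol b (n+1) m + b * wSol b n (m+1)
        + wSol b (n+1) (m+1) = 0)
    ∧ (∀ m : ℕ, wSol b 0 m = 1)
    ∧ (∀ n : ℕ, wSol b n 0 = (2 : ℝ)^(-(n : ℤ))) := by
  have hc : b + 1/2 ≠ 0 := by
    intro h; apply hb2; linarith
  have hd : (-1 - 2*b : ℝ) ≠ 0 := by
    intro h; apply hb2; linarith
  refine ⟨?_, ?_, ?_⟩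
  · intro n m
    rw [WSolAux.wSol_eq, WSolAux.wSol_eq, WSolAux.wSol_eq, WSolAux.wSol_eq]
    have hA : 1 / ((2:ℝ)^n * (-1 - 2*b)^m) - 1 / ((2:ℝ)^(n+1) * (-1 - 2*b)^m)
        + b * (1 / ((2:ℝ)^n * (-1 - 2*b)^(m+1)))
        + 1 / ((2:ℝ)^(n+1) * (-1 - 2*b)^(m+1)) = 0 := by
      have h2 : ((2:ℝ)^n) ≠ 0 := by positivity
      have h3 : ((-1 - 2*b : ℝ)^m) ≠ 0 := pow_ne_zero _ hd
      rw [pow_succ, pow_succ]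
      field_simp
      ring
    have hK := WSolAux.key b n m
    linarith [hA, hK]
  · intro m
    cases m with
    | zero => simp [wSol]
    | succ k =>
      rw [WSolAux.wSol_eq]
      have hfS : WSolAux.fS b 0 (k+1) = ((-1/2)/(b+1/2))^(k+1) - 1 := by
        unfold WSolAux.fS
        have hterm : ∀ κ ∈ Finset.range (k+1),
            (-1:ℝ)^(0+(k+1)-κ) / (b+1/2)^((k+1)-κ) * WSolAux.fF b 0 (k+1) κ
            = (-(1+b)/(b+1/2))^((k+1)-κ) * ((k+1).choose κ : ℝ) := by
          intro κ hκ
          simp only [Finset.mem_range] at hκ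
          rw [WSolAux.fF_zero b (k+1) κ (by omega)]
          have h0 : (0:ℕ)+(k+1)-κ = (k+1)-κ := by omega
          have hneg : (-(1+b) : ℝ) = (-1) * (1+b) := by ring
          rw [h0, div_pow, hneg, mul_pow]
          ring
        rw [Finset.sum_congr rfl hterm]
        have hsplit := Finset.sum_range_succ
          (fun κ => (1:ℝ)^κ * (-(1+b)/(b+1/2))^((k+1)-κ) * ((k+1).choose κ : ℝ)) (k+1)
        rw [← add_pow (1:ℝ) (-(1+b)/(b+1/2)) (k+1)] at hsplit
        simp only [Nat.sub_self, pow_zero, Nat.choose_self, Nat.cast_one, one_pow,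
          mul_one, one_mul] at hsplit
        have h1 : ((1:ℝ) + -(1+b)/(b+1/2)) = (-1/2)/(b+1/2) := by
          rw [eq_div_iff hc, add_mul, div_mul_cancel₀ _ hc]
          ring
        rw [h1] at hsplit
        linarith [hsplit]
      rw [hfS]
      have h2 : ((-1/2:ℝ)/(b+1/2)) = 1/(-1 - 2*b) := by
        rw [div_eq_div_iff hc hd]
        ring
      rw [h2, div_pow, one_pow, pow_zero, one_mul]
      ring
  · intro n
    simp [wSol]
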